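/- Let λ = (λ₁, 0) and μ = (μ₁, μ₂) be partitions with at most two parts with λ ≤ μ, and set m₁ = μ₁ − λ₁ and m₂ = μ₂. Let γ be a partition with |γ| = m₁ + m₂. Then the number of Littlewood–Richardson tableaux of shape μ/λ and content γ equals 1 if γ has at most two parts, γ₂ ≤ min(m₁, m₂), and μ₂ ≤ λ₁ + γ₂; and it equals 0 otherwise. (This is the combinatorial content of Lemma 2.16 of the paper: the set Γ_{μ/λ} of contents γ with c^μ_{λ,γ} = 1 consists of the partitions (max{m₁,m₂}, min{m₁,m₂}), (max{m₁,m₂}+1, min{m₁,m₂}−1), …, down to second part equal to max{0, μ₂−λ₁}.) -/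

import Mathlib

/-- The cells of the two-row skew diagram `μ/λ` (rows indexed `0,1`, columns 0-indexed):
cell `(i,j)` lies in row `i` with `λᵢ ≤ j < μᵢ`. -/
def Cell2 (la mu : ℕ × ℕ) (i j : ℕ) : Prop :=
  (i = 0 ∧ la.1 ≤ j ∧ j < mu.1) ∨ (i = 1 ∧ la.2 ≤ j ∧ j < mu.2)

/-- The reverse reading word of a filling `T` of the two-row skew shape `μ/λ`:
rows top to bottom, each row read right to left. -/
def word2 (la mu : ℕ × ℕ) (T : ℕ → ℕ → ℕ) : List ℕ :=
  ((List.range' la.1 (mu.1 - la.1)).map (T 0)).reverse ++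
    ((List.range' la.2 (mu.2 - la.2)).map (T 1)).reverse

/-- `T` is a semistandard skew tableau of shape `μ/λ`: positive entries, weakly
increasing along rows, strictly increasing down columns. -/
def IsSSYT2 (la mu : ℕ × ℕ) (T : ℕ → ℕ → ℕ) : Prop :=
  (∀ i j, Cell2 la mu i j → 1 ≤ T i j) ∧
  (∀ i j, Cell2 la mu i j → Cell2 la mu i (j + 1) → T i j ≤ T i (j + 1)) ∧
  (∀ j, Cell2 la mu 0 j → Cell2 la mu 1 j → T 0 j < T 1 j)

/-- A word is a lattice word if in every initial segment each `c+1` occurs no more often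
than `c` (for positive `c`). -/
def IsLatticeWord (w : List ℕ) : Prop :=
  ∀ n c, 1 ≤ c → (w.take n).count (c + 1) ≤ (w.take n).count c

/-- `T` is a Littlewood–Richardson tableau of shape `μ/λ` and content `γ`. -/
def IsLR2 (la mu : ℕ × ℕ) (γ : ℕ → ℕ) (T : ℕ → ℕ → ℕ) : Prop :=
  IsSSYT2 la mu T ∧ IsLatticeWord (word2 la mu T) ∧
    ∀ c, 1 ≤ c → (word2 la mu T).count c = γ c


lemma count_rep (x y n : ℕ) : (List.replicate n y).count x = if x = y then n else 0 := by
  rw [List.count_replicate]; simp only [beq_iff_eq]; exact if_congr eq_comm rfl rfl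

lemma count_concrete (a b c x : ℕ) :
    ((List.replicate a 1 ++ (List.replicate b 2 ++ List.replicate c 1)).count x)
      = (if x = 1 then a + c else 0) + (if x = 2 then b else 0) := by
  simp only [List.count_append, count_rep]
  split_ifs <;> omega

lemma take_concrete_count (a b c n x : ℕ) :
    (((List.replicate a 1 ++ (List.replicate b 2 ++ List.replicate c 1)).take n).count x)
      = (if x = 1 then min n a + min (n - a - b) c else 0) + (if x = 2 then min (n - a) b else 0) := by
  rw [List.take_append, List.take_append]
  simp only [List.take_replicate, List.count_append, count_rep, List.length_replicate]
  split_ifs <;> omega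

lemma lattice_concrete (a b c : ℕ) (hba : b ≤ a) :
    IsLatticeWord (List.replicate a 1 ++ (List.replicate b 2 ++ List.replicate c 1)) := by
  intro n d hd
  rw [take_concrete_count, take_concrete_count]
  split_ifs <;> omega

lemma rev_map_range'_concat (f : ℕ → ℕ) (s n : ℕ) :
    ((List.range' s (n + 1)).map f).reverse = f (s + n) :: ((List.range' s n).map f).reverse := by
  rw [List.range'_concat]; simp

lemma mono0 (l1 mu1 mu2 : ℕ) (T : ℕ → ℕ → ℕ) (hT : IsSSYT2 (l1, 0) (mu1, mu2) T)
    {j j' : ℕ} (h1 : l1 ≤ j) (h2 : j ≤ j') (h3 : j' < mu1) : T 0 j ≤ T 0 j' := by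
  obtain ⟨d, rfl⟩ := Nat.exists_eq_add_of_le h2
  clear h2
  induction d with
  | zero => simp
  | succ d ih =>
    have hstep : T 0 (j + d) ≤ T 0 (j + d + 1) :=
      hT.2.1 0 (j + d) (Or.inl ⟨rfl, by omega, by omega⟩) (Or.inl ⟨rfl, by omega, by omega⟩)
    exact le_trans (ih (by omega)) hstep

lemma mono1 (l1 mu1 mu2 : ℕ) (T : ℕ → ℕ → ℕ) (hT : IsSSYT2 (l1, 0) (mu1, mu2) T)
    {j j' : ℕ} (h2 : j ≤ j') (h3 : j' < mu2) : T 1 j ≤ T 1 j' := by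
  obtain ⟨d, rfl⟩ := Nat.exists_eq_add_of_le h2
  clear h2
  induction d with
  | zero => simp
  | succ d ih =>
    have hstep : T 1 (j + d) ≤ T 1 (j + d + 1) :=
      hT.2.1 1 (j + d) (Or.inr ⟨rfl, by omega, by omega⟩) (Or.inr ⟨rfl, by omega, by omega⟩)
    exact le_trans (ih (by omega)) hstep

lemma word_formula (l1 mu1 mu2 k : ℕ) (T : ℕ → ℕ → ℕ) (hk : k ≤ mu2)
    (h0 : ∀ j, l1 ≤ j → j < mu1 → T 0 j = 1)
    (h1 : ∀ j, j < k → T 1 j = 1) (h2 : ∀ j, k ≤ j → j < mu2 → T 1 j = 2) :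
    word2 (l1, 0) (mu1, mu2) T
      = List.replicate (mu1 - l1) 1 ++ (List.replicate (mu2 - k) 2 ++ List.replicate k 1) := by
  have e0 : (List.range' l1 (mu1 - l1)).map (T 0) = List.replicate (mu1 - l1) 1 := by
    rw [List.eq_replicate_iff]
    refine ⟨by simp, ?_⟩
    intro b hb
    simp only [List.mem_map, List.mem_range'_1] at hb
    obtain ⟨j, hj, rfl⟩ := hb
    exact h0 j (by omega) (by omega)
  have e1 : (List.range' 0 mu2).map (T 1)
      = List.replicate k 1 ++ List.replicate (mu2 - k) 2 := by
    have hr : List.range' 0 mu2 = List.range' 0 k ++ List.range' k (mu2 - k) := by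
      have h := List.range'_append (s := 0) (m := k) (n := mu2 - k) (step := 1)
      simp only [one_mul, Nat.zero_add] at h
      rw [h, show k + (mu2 - k) = mu2 from by omega]
    rw [hr, List.map_append]
    congr 1
    · rw [List.eq_replicate_iff]
      refine ⟨by simp, ?_⟩
      intro b hb
      simp only [List.mem_map, List.mem_range'_1] at hb
      obtain ⟨j, hj, rfl⟩ := hb
      exact h1 j (by omega)
    · rw [List.eq_replicate_iff]
      refine ⟨by simp, ?_⟩
      intro b hb
      simp only [List.mem_map, List.mem_range'_1] at hb
      obtain ⟨j, hj, rfl⟩ := hb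
      exact h2 j (by omega) (by omega)
  show ((List.range' l1 (mu1 - l1)).map (T 0)).reverse ++
      ((List.range' 0 (mu2 - 0)).map (T 1)).reverse = _
  rw [Nat.sub_zero, e0, e1, List.reverse_replicate, List.reverse_append,
    List.reverse_replicate, List.reverse_replicate]

lemma analysis (l1 mu1 mu2 : ℕ) (hmu : mu2 ≤ mu1) (g : ℕ → ℕ) (T : ℕ → ℕ → ℕ)
    (hT : IsLR2 (l1, 0) (mu1, mu2) g T) :
    (∀ j, l1 ≤ j → j < mu1 → T 0 j = 1) ∧
    g 2 ≤ mu2 ∧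
    (∀ j, j < mu2 - g 2 → T 1 j = 1) ∧ (∀ j, mu2 - g 2 ≤ j → j < mu2 → T 1 j = 2) ∧
    (∀ c, 3 ≤ c → g c = 0) ∧ g 2 ≤ min (mu1 - l1) mu2 ∧ mu2 ≤ l1 + g 2 := by
  obtain ⟨hS, hlat, hcount⟩ := hT
  obtain ⟨hpos, hrow, hcol⟩ := hS
  have hw : word2 (l1, 0) (mu1, mu2) T
      = ((List.range' l1 (mu1 - l1)).map (T 0)).reverse ++
        ((List.range' 0 mu2).map (T 1)).reverse := by
    show _ ++ ((List.range' 0 (mu2 - 0)).map (T 1)).reverse = _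
    rw [Nat.sub_zero]
  -- Step A : first row is all 1s
  have hA : ∀ j, l1 ≤ j → j < mu1 → T 0 j = 1 := by
    intro j hj1 hj2
    have hm1 : l1 < mu1 := by omega
    have hlast : T 0 (mu1 - 1) = 1 := by
      have ha1 : 1 ≤ T 0 (mu1 - 1) :=
        hpos 0 (mu1 - 1) (Or.inl ⟨rfl, by omega, by omega⟩)
      by_contra hne
      have ha2 : 2 ≤ T 0 (mu1 - 1) := by omega
      obtain ⟨d, hd⟩ : ∃ d, mu1 - l1 = d + 1 := ⟨mu1 - l1 - 1, by omega⟩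
      have ht : word2 (l1, 0) (mu1, mu2) T = T 0 (mu1 - 1) ::
          (((List.range' l1 d).map (T 0)).reverse ++
            ((List.range' 0 mu2).map (T 1)).reverse) := by
        rw [hw, hd, rev_map_range'_concat, List.cons_append,
          show l1 + d = mu1 - 1 from by omega]
      have hl := hlat 1 (T 0 (mu1 - 1) - 1) (by omega)
      rw [ht] at hl
      simp only [List.take_succ_cons, List.take_zero, List.count_singleton] at hl
      rw [show T 0 (mu1 - 1) - 1 + 1 = T 0 (mu1 - 1) from by omega] at hl
      simp only [beq_iff_eq] at hl
      split_ifs at hl <;> omega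
    have h1 : 1 ≤ T 0 j := hpos 0 j (Or.inl ⟨rfl, hj1, hj2⟩)
    have h2 : T 0 j ≤ T 0 (mu1 - 1) :=
      mono0 l1 mu1 mu2 T ⟨hpos, hrow, hcol⟩ hj1 (by omega) (by omega)
    omega
  have hL0 : (List.range' l1 (mu1 - l1)).map (T 0) = List.replicate (mu1 - l1) 1 := by
    rw [List.eq_replicate_iff]
    refine ⟨by simp, ?_⟩
    intro b hb
    simp only [List.mem_map, List.mem_range'_1] at hb
    obtain ⟨j, hj, rfl⟩ := hb
    exact hA j (by omega) (by omega)
  -- Step B : second row entries are ≤ 2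
  have hB : ∀ j, j < mu2 → T 1 j ≤ 2 := by
    intro j hj
    have hmax : T 1 (mu2 - 1) ≤ 2 := by
      by_contra hne
      have ha3 : 3 ≤ T 1 (mu2 - 1) := by omega
      obtain ⟨e, he⟩ : ∃ e, mu2 = e + 1 := ⟨mu2 - 1, by omega⟩
      have hee : mu2 - 1 = e := by omega
      have ht : word2 (l1, 0) (mu1, mu2) T
          = List.replicate (mu1 - l1) 1 ++ T 1 (mu2 - 1) ::
            ((List.range' 0 e).map (T 1)).reverse := by
        rw [hw, hL0, List.reverse_replicate, hee, he, rev_map_range'_concat, Nat.zero_add]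
      have hl := hlat ((mu1 - l1) + 1) (T 1 (mu2 - 1) - 1) (by omega)
      rw [ht, List.take_append] at hl
      simp only [List.length_replicate, List.take_replicate, Nat.add_sub_cancel_left,
        List.take_succ_cons, List.take_zero, List.count_append, count_rep,
        List.count_singleton, beq_iff_eq,
        show min (mu1 - l1 + 1) (mu1 - l1) = mu1 - l1 from by omega] at hl
      rw [show T 1 (mu2 - 1) - 1 + 1 = T 1 (mu2 - 1) from by omega] at hl
      split_ifs at hl <;> omega
    have := mono1 l1 mu1 mu2 T ⟨hpos, hrow, hcol⟩ (show j ≤ mu2 - 1 from by omega)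
      (show mu2 - 1 < mu2 from by omega)
    omega
  -- threshold
  obtain ⟨k, hk, hk1, hk2⟩ : ∃ k, k ≤ mu2 ∧ (∀ j, j < k → T 1 j = 1) ∧
      (∀ j, k ≤ j → j < mu2 → T 1 j = 2) := by
    by_cases hex : ∃ j, j < mu2 ∧ T 1 j = 2
    · refine ⟨Nat.find hex, (Nat.find_spec hex).1.le, ?_, ?_⟩
      · intro j hj
        have hmin := Nat.find_min hex hj
        have hjm : j < mu2 := lt_trans hj (Nat.find_spec hex).1
        have h1 : 1 ≤ T 1 j := hpos 1 j (Or.inr ⟨rfl, by omega, hjm⟩)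
        have h2 := hB j hjm
        have : T 1 j ≠ 2 := fun h => hmin ⟨hjm, h⟩
        omega
      · intro j hj1 hj2
        have h1 : T 1 (Nat.find hex) ≤ T 1 j :=
          mono1 l1 mu1 mu2 T ⟨hpos, hrow, hcol⟩ hj1 hj2
        have h2 := hB j hj2
        have h3 := (Nat.find_spec hex).2
        omega
    · push_neg at hex
      refine ⟨mu2, le_rfl, ?_, fun j h1 h2 => by omega⟩
      intro j hj
      have h1 : 1 ≤ T 1 j := hpos 1 j (Or.inr ⟨rfl, by omega, hj⟩)
      have h2 := hB j hj
      have h3 := hex j hj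
      omega
  have hword := word_formula l1 mu1 mu2 k T hk hA hk1 hk2
  have hg2 : g 2 = mu2 - k := by
    have h := hcount 2 (by omega)
    rw [hword, count_concrete] at h
    norm_num at h
    omega
  have hg3 : ∀ c, 3 ≤ c → g c = 0 := by
    intro c hc
    have h := hcount c (by omega)
    rw [hword, count_concrete] at h
    split_ifs at h <;> omega
  have hm1 : mu2 - k ≤ mu1 - l1 := by
    have h := hlat ((mu1 - l1) + (mu2 - k)) 1 le_rfl
    rw [hword, take_concrete_count, take_concrete_count] at h
    split_ifs at h <;> omega
  have hcolb : mu2 ≤ l1 + (mu2 - k) := by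
    by_cases hcase : l1 < mu2
    · have hc0 : Cell2 (l1, 0) (mu1, mu2) 0 l1 := Or.inl ⟨rfl, le_rfl, by omega⟩
      have hc1 : Cell2 (l1, 0) (mu1, mu2) 1 l1 := Or.inr ⟨rfl, by omega, hcase⟩
      have hlt := hcol l1 hc0 hc1
      rw [hA l1 le_rfl (by omega)] at hlt
      have hkl : ¬ (l1 < k) := fun h => by rw [hk1 l1 h] at hlt; omega
      omega
    · omega
  refine ⟨hA, by omega, ?_, ?_, hg3, by omega, by omega⟩
  · intro j hj
    exact hk1 j (by omega)
  · intro j hj1 hj2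
    exact hk2 j (by omega) hj2

lemma cell2_iff (l1 mu1 mu2 i j : ℕ) :
    Cell2 (l1, 0) (mu1, mu2) i j ↔ (i = 0 ∧ l1 ≤ j ∧ j < mu1) ∨ (i = 1 ∧ j < mu2) := by
  unfold Cell2; simp


/-- The combinatorial content of Lemma 2.16: for `λ = (λ₁, 0) ≤ μ = (μ₁, μ₂)` with
`m₁ = μ₁ − λ₁`, `m₂ = μ₂`, and a partition `γ` (encoded as a finitely supported content
function, `γ c` = number of entries equal to `c`) with `|γ| = m₁ + m₂`, the number of
Littlewood–Richardson tableaux of shape `μ/λ` and content `γ` is `1` if `γ` has at most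
two parts, `γ₂ ≤ min(m₁,m₂)` and `μ₂ ≤ λ₁ + γ₂`, and is `0` otherwise. -/
theorem stmt10 (l1 mu1 mu2 : ℕ) (hmu : mu2 ≤ mu1) (hl : l1 ≤ mu1)
    (γ : ℕ →₀ ℕ) (hγ0 : γ 0 = 0) (hγmono : ∀ c, 1 ≤ c → γ (c + 1) ≤ γ c)
    (hγsum : (γ.sum fun _ n => n) = (mu1 - l1) + mu2) :
    (((∀ c, 3 ≤ c → γ c = 0) ∧ γ 2 ≤ min (mu1 - l1) mu2 ∧ mu2 ≤ l1 + γ 2) →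
      ∃! T : ℕ → ℕ → ℕ,
        (∀ i j, ¬ Cell2 (l1, 0) (mu1, mu2) i j → T i j = 0) ∧
          IsLR2 (l1, 0) (mu1, mu2) (fun c => γ c) T) ∧
    (¬ ((∀ c, 3 ≤ c → γ c = 0) ∧ γ 2 ≤ min (mu1 - l1) mu2 ∧ mu2 ≤ l1 + γ 2) →
      ¬ ∃ T : ℕ → ℕ → ℕ, IsLR2 (l1, 0) (mu1, mu2) (fun c => γ c) T) := by
  have hsum12 : (∀ c, 3 ≤ c → γ c = 0) → γ 1 + γ 2 = (mu1 - l1) + mu2 := by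
    intro h3
    have hss : γ.support ⊆ ({0, 1, 2} : Finset ℕ) := by
      intro c hc
      rw [Finsupp.mem_support_iff] at hc
      by_contra hmem
      simp only [Finset.mem_insert, Finset.mem_singleton] at hmem
      push_neg at hmem
      exact hc (h3 c (by omega))
    have hh := Finsupp.sum_of_support_subset γ hss (fun _ n => n) (fun i _ => rfl)
    rw [hγsum] at hh
    rw [show ({0, 1, 2} : Finset ℕ) = insert 0 (insert 1 {2}) from rfl,
      Finset.sum_insert (by decide), Finset.sum_insert (by decide),
      Finset.sum_singleton] at hh
    have hh' : (mu1 - l1) + mu2 = γ 0 + (γ 1 + γ 2) := hh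
    omega
  constructor
  · rintro ⟨h3, hmin, hcolh⟩
    have hg2m2 : γ 2 ≤ mu2 := le_trans hmin (min_le_right _ _)
    have hg2m1 : γ 2 ≤ mu1 - l1 := le_trans hmin (min_le_left _ _)
    have hs := hsum12 h3
    obtain ⟨Tc, hTc⟩ : ∃ Tc : ℕ → ℕ → ℕ, Tc = fun i j =>
        if i = 0 ∧ l1 ≤ j ∧ j < mu1 then 1
        else if i = 1 ∧ j < mu2 then (if j < mu2 - γ 2 then 1 else 2) else 0 := ⟨_, rfl⟩
    have hTc0 : ∀ j, l1 ≤ j → j < mu1 → Tc 0 j = 1 := by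
      intro j h1 h2; simp [hTc, h1, h2]
    have hTc1a : ∀ j, j < mu2 - γ 2 → Tc 1 j = 1 := by
      intro j h
      have hj2 : j < mu2 := by omega
      simp [hTc, h, hj2]
    have hTc1b : ∀ j, mu2 - γ 2 ≤ j → j < mu2 → Tc 1 j = 2 := by
      intro j h1 h2
      have hj : ¬ j < mu2 - γ 2 := by omega
      simp [hTc, h2, hj]
    have hoff : ∀ i j, ¬ Cell2 (l1, 0) (mu1, mu2) i j → Tc i j = 0 := by
      intro i j h
      rw [cell2_iff] at h
      push_neg at h
      simp only [hTc]
      rw [if_neg, if_neg]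
      · rintro ⟨hi, hj⟩; have := h.2 hi; omega
      · rintro ⟨hi, hj1, hj2⟩; have := h.1 hi hj1; omega
    have hssyt : IsSSYT2 (l1, 0) (mu1, mu2) Tc := by
      refine ⟨?_, ?_, ?_⟩
      · intro i j hc
        rcases (cell2_iff l1 mu1 mu2 i j).mp hc with ⟨hi, h1, h2⟩ | ⟨hi, h2⟩
        · subst hi; rw [hTc0 j h1 h2]
        · subst hi
          by_cases hj : j < mu2 - γ 2
          · rw [hTc1a j hj]
          · rw [hTc1b j (by omega) h2]; omega
      · intro i j hc hc'
        rcases (cell2_iff l1 mu1 mu2 i j).mp hc with ⟨hi, h1, h2⟩ | ⟨hi, h2⟩ <;>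
          rcases (cell2_iff l1 mu1 mu2 i (j + 1)).mp hc' with ⟨hi', h1', h2'⟩ | ⟨hi', h2'⟩
        · subst hi; rw [hTc0 j h1 h2, hTc0 (j + 1) h1' h2']
        · omega
        · omega
        · subst hi
          by_cases hj : j + 1 < mu2 - γ 2
          · rw [hTc1a j (by omega), hTc1a (j + 1) hj]
          · by_cases hj2 : j < mu2 - γ 2
            · rw [hTc1a j hj2, hTc1b (j + 1) (by omega) h2']; omega
            · rw [hTc1b j (by omega) h2, hTc1b (j + 1) (by omega) h2']
      · intro j hc0 hc1
        rcases (cell2_iff l1 mu1 mu2 0 j).mp hc0 with ⟨-, h1, h2⟩ | ⟨hi, -⟩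
        · rcases (cell2_iff l1 mu1 mu2 1 j).mp hc1 with ⟨hi', -⟩ | ⟨-, h2'⟩
          · omega
          · rw [hTc0 j h1 h2, hTc1b j (by omega) h2']
            omega
        · omega
    have hword := word_formula l1 mu1 mu2 (mu2 - γ 2) Tc (by omega) hTc0 hTc1a hTc1b
    rw [show mu2 - (mu2 - γ 2) = γ 2 from by omega] at hword
    have hlr : IsLR2 (l1, 0) (mu1, mu2) (fun c => γ c) Tc := by
      refine ⟨hssyt, ?_, ?_⟩
      · rw [hword]
        exact lattice_concrete _ _ _ hg2m1
      · intro c hc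
        show (word2 (l1, 0) (mu1, mu2) Tc).count c = γ c
        rw [hword, count_concrete]
        rcases Nat.lt_or_ge c 3 with h | h
        · interval_cases c <;> norm_num <;> omega
        · rw [h3 c h]; split_ifs <;> omega
    refine ⟨Tc, ⟨hoff, hlr⟩, ?_⟩
    rintro T ⟨hToff, hTlr⟩
    obtain ⟨hA, hg2, h1a, h1b, -, -, -⟩ := analysis l1 mu1 mu2 hmu (fun c => γ c) T hTlr
    funext i j
    by_cases hc : Cell2 (l1, 0) (mu1, mu2) i j
    · rcases (cell2_iff l1 mu1 mu2 i j).mp hc with ⟨hi, h1, h2⟩ | ⟨hi, h2⟩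
      · subst hi; rw [hA j h1 h2, hTc0 j h1 h2]
      · subst hi
        by_cases hj : j < mu2 - γ 2
        · rw [h1a j hj, hTc1a j hj]
        · rw [h1b j (by omega) h2, hTc1b j (by omega) h2]
    · rw [hToff i j hc, hoff i j hc]
  · rintro hbad ⟨T, hT⟩
    obtain ⟨-, -, -, -, h3, hmin, hcolh⟩ := analysis l1 mu1 mu2 hmu (fun c => γ c) T hT
    exact hbad ⟨h3, hmin, hcolh⟩
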